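/- For any σ > 1, the function ρ₁(s_A, s_B) = 1/((σ/(σ-1) - s_A)(σ/(σ-1) - s_B)) is convex on the convex set [0,1] × [0,1]; i.e., for any x, y ∈ [0,1]² and t ∈ [0,1], ρ₁(t·x + (1-t)·y) ≤ t·ρ₁(x) + (1-t)·ρ₁(y). -/

import Mathlib

open Real Set

lemma neglog_fst_convex (c : ℝ) (hc : 1 < c) :
    ConvexOn ℝ (Set.Icc (0 : ℝ) 1 ×ˢ Set.Icc (0 : ℝ) 1)
      (fun p : ℝ × ℝ => -Real.log (c - p.1)) := by
  refine ⟨(convex_Icc (0:ℝ) 1).prod (convex_Icc 0 1), ?_⟩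
  rintro p hp q hq a b ha hb hab
  have hp1 : (0:ℝ) < c - p.1 := by have := hp.1.2; linarith
  have hq1 : (0:ℝ) < c - q.1 := by have := hq.1.2; linarith
  have := (strictConcaveOn_log_Ioi.concaveOn.neg).2 (mem_Ioi.2 hp1) (mem_Ioi.2 hq1) ha hb hab
  simpa [smul_eq_mul, show a * (c - p.1) + b * (c - q.1) = c - (a * p.1 + b * q.1) by
    nlinarith [hab]] using this

lemma neglog_snd_convex (c : ℝ) (hc : 1 < c) :
    ConvexOn ℝ (Set.Icc (0 : ℝ) 1 ×ˢ Set.Icc (0 : ℝ) 1)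
      (fun p : ℝ × ℝ => -Real.log (c - p.2)) := by
  refine ⟨(convex_Icc (0:ℝ) 1).prod (convex_Icc 0 1), ?_⟩
  rintro p hp q hq a b ha hb hab
  have hp1 : (0:ℝ) < c - p.2 := by have := hp.2.2; linarith
  have hq1 : (0:ℝ) < c - q.2 := by have := hq.2.2; linarith
  have := (strictConcaveOn_log_Ioi.concaveOn.neg).2 (mem_Ioi.2 hp1) (mem_Ioi.2 hq1) ha hb hab
  simpa [smul_eq_mul, show a * (c - p.2) + b * (c - q.2) = c - (a * p.2 + b * q.2) by
    nlinarith [hab]] using this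

/-- CES cross-firm scaling factor ρ₁ is convex on [0,1] × [0,1], for σ > 1. -/
theorem rho1_CES_convexOn (σ : ℝ) (hσ : 1 < σ) :
    ConvexOn ℝ (Set.Icc (0 : ℝ) 1 ×ˢ Set.Icc (0 : ℝ) 1)
      (fun p : ℝ × ℝ => 1 / ((σ / (σ - 1) - p.1) * (σ / (σ - 1) - p.2))) := by
  set c : ℝ := σ / (σ - 1) with hcdef
  have hc : 1 < c := by
    rw [hcdef, lt_div_iff₀ (by linarith)]
    linarith
  have hsum : ConvexOn ℝ (Set.Icc (0 : ℝ) 1 ×ˢ Set.Icc (0 : ℝ) 1)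
      (fun p : ℝ × ℝ => -Real.log (c - p.1) + -Real.log (c - p.2)) :=
    (neglog_fst_convex c hc).add (neglog_snd_convex c hc)
  have hcomp : ConvexOn ℝ (Set.Icc (0 : ℝ) 1 ×ˢ Set.Icc (0 : ℝ) 1)
      (fun p : ℝ × ℝ => Real.exp (-Real.log (c - p.1) + -Real.log (c - p.2))) := by
    refine ⟨hsum.1, fun p hp q hq a b ha hb hab => ?_⟩
    calc Real.exp (-Real.log (c - (a • p + b • q).1) + -Real.log (c - (a • p + b • q).2))
        ≤ Real.exp (a • (-Real.log (c - p.1) + -Real.log (c - p.2))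
            + b • (-Real.log (c - q.1) + -Real.log (c - q.2))) :=
          Real.exp_le_exp.2 (hsum.2 hp hq ha hb hab)
      _ ≤ a • Real.exp (-Real.log (c - p.1) + -Real.log (c - p.2))
            + b • Real.exp (-Real.log (c - q.1) + -Real.log (c - q.2)) :=
          convexOn_exp.2 (mem_univ _) (mem_univ _) ha hb hab
  refine hcomp.congr fun p hp => ?_
  have hp1 : (0:ℝ) < c - p.1 := by have := hp.1.2; linarith
  have hp2 : (0:ℝ) < c - p.2 := by have := hp.2.2; linarith
  beta_reduce
  rw [show -Real.log (c - p.1) + -Real.log (c - p.2)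
      = -(Real.log (c - p.1) + Real.log (c - p.2)) by ring, ← Real.log_mul hp1.ne' hp2.ne', Real.exp_neg, Real.exp_log (by positivity)]
  simp [one_div]
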